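/- arXiv:0904.1717 — 2 statements merged into one kernel-verified Lean document; each statement's English description precedes it below -/
import Mathlib

section
/- Let O be a noetherian object of C and q_i : O → M_i (i = 1, …, n) epimorphisms. For each simple object P of C, precomposition with q_i is an injective k-linear map Hom_C(M_i, P) → Hom_C(O, P); let V_i(P) denote its image. Suppose that for every simple object P of C the k-subspaces V_1(P), …, V_n(P) of Hom_C(O, P) are linearly independent, i.e. for each i, V_i(P) ∩ (Σ_{j≠i} V_j(P)) = 0. Then the induced morphism O → M_1 ⊕ ⋯ ⊕ M_n is an epimorphism. -/
open CategoryTheory CategoryTheory.Limits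

attribute [local instance] CategoryTheory.Abelian.hasFiniteBiproducts

section Aux

variable {C : Type*} [Category C] [Abelian C]

/-- A quotient of a noetherian object is noetherian. -/
lemma aux_noetherianObject_of_epi {X Y : C} (e : X ⟶ Y) (he : Epi e)
    (hX : IsNoetherianObject X) : IsNoetherianObject Y := by
  haveI := he
  let φ : Subobject Y → Subobject X := fun Z => Subobject.mk (pullback.snd Z.arrow e)
  have hmono : Monotone φ := by
    intro Z₁ Z₂ h
    exact Subobject.mk_le_mk_of_comm
      (pullback.lift (pullback.fst _ _ ≫ Subobject.ofLE _ _ h) (pullback.snd _ _)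
        (by rw [Category.assoc, Subobject.ofLE_arrow, pullback.condition]))
      (pullback.lift_snd _ _ _)
  have hrefl : ∀ Z₁ Z₂ : Subobject Y, φ Z₁ ≤ φ Z₂ → Z₁ ≤ Z₂ := by
    intro Z₁ Z₂ h
    haveI := strongEpi_of_epi (pullback.fst Z₁.arrow e)
    have w : (Subobject.ofMkLEMk _ _ h ≫ pullback.fst Z₂.arrow e) ≫ Z₂.arrow
        = pullback.fst Z₁.arrow e ≫ Z₁.arrow := by
      rw [Category.assoc, pullback.condition, ← Category.assoc, Subobject.ofMkLEMk_comp,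
        pullback.condition]
    have sq : CommSq (Subobject.ofMkLEMk _ _ h ≫ pullback.fst Z₂.arrow e)
        (pullback.fst Z₁.arrow e) Z₂.arrow Z₁.arrow := ⟨w⟩
    exact Subobject.le_of_comm sq.lift sq.fac_right
  refine ⟨⟨?_⟩⟩
  refine Subrelation.wf ?_ (InvImage.wf φ (by haveI := hX; exact wellFounded_gt))
  intro Z₁ Z₂ h
  exact lt_of_le_not_ge (hmono h.le) fun hc => h.not_ge (hrefl _ _ hc)

/-- A nonzero noetherian object admits a simple quotient. -/
lemma aux_exists_simple_quotient {X : C} (hX : IsNoetherianObject X) (h : ¬ IsZero X) :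
    ∃ (P : C) (π : X ⟶ P), Epi π ∧ Simple P := by
  haveI := hX
  haveI : Nontrivial (Subobject X) := Subobject.nontrivial_of_not_isZero h
  haveI := isCoatomic_of_orderTop_gt_wellFounded
    (wellFounded_gt (α := Subobject X))
  obtain ⟨N, hN, -⟩ :=
    (IsCoatomic.eq_top_or_exists_le_coatom (⊥ : Subobject X)).resolve_left bot_ne_top
  refine ⟨cokernel N.arrow, cokernel.π N.arrow, inferInstance, ?_⟩
  apply simple_of_cosimple
  intro Z f hf
  haveI := hf
  constructor
  · intro hiso hzero
    haveI := hiso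
    have hzc : IsZero (cokernel N.arrow) :=
      (IsZero.of_epi_eq_zero f hzero).of_iso (asIso f)
    have : cokernel.π N.arrow = 0 := hzc.eq_zero_of_tgt _
    haveI : Epi N.arrow := Abelian.epi_of_cokernel_π_eq_zero _ this
    haveI : IsIso N.arrow := isIso_of_mono_of_epi _
    exact hN.1 ((Subobject.isIso_arrow_iff_eq_top N).mp inferInstance)
  · intro hfne
    have hg : cokernel.π N.arrow ≫ f ≠ 0 := fun hgz =>
      hfne ((cancel_epi (cokernel.π N.arrow)).mp (by rw [hgz, comp_zero]))
    have hle : N ≤ Subobject.mk (kernel.ι (cokernel.π N.arrow ≫ f)) :=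
      Subobject.le_mk_of_comm
        (kernel.lift _ N.arrow (by rw [← Category.assoc, cokernel.condition, zero_comp]))
        (kernel.lift_ι _ _ _)
    have hne : Subobject.mk (kernel.ι (cokernel.π N.arrow ≫ f)) ≠ ⊤ := by
      intro htop
      haveI : IsIso (kernel.ι (cokernel.π N.arrow ≫ f)) :=
        (Subobject.isIso_iff_mk_eq_top _).mpr htop
      exact hg ((cancel_epi (kernel.ι (cokernel.π N.arrow ≫ f))).mp
        (by rw [kernel.condition, comp_zero]))
    have heq : Subobject.mk (kernel.ι (cokernel.π N.arrow ≫ f)) ≤ N :=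
      (hle.lt_or_eq.resolve_left fun hlt => hne (hN.2 _ hlt)).ge
    have hker : kernel.ι (cokernel.π N.arrow ≫ f) ≫ cokernel.π N.arrow = 0 := by
      rw [← Subobject.ofMkLE_arrow heq, Category.assoc, cokernel.condition, comp_zero]
    have hι : kernel.ι f = 0 := by
      have hsnd : (pullback.snd (kernel.ι f) (cokernel.π N.arrow)) ≫
          (cokernel.π N.arrow ≫ f) = 0 := by
        rw [← Category.assoc, ← pullback.condition, Category.assoc, kernel.condition,
          comp_zero]
      have hfac : pullback.snd (kernel.ι f) (cokernel.π N.arrow) =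
          kernel.lift (cokernel.π N.arrow ≫ f) _ hsnd ≫
            kernel.ι (cokernel.π N.arrow ≫ f) := (kernel.lift_ι _ _ _).symm
      have hz : pullback.fst (kernel.ι f) (cokernel.π N.arrow) ≫ kernel.ι f = 0 := by
        rw [pullback.condition, hfac, Category.assoc, hker, comp_zero]
      exact (cancel_epi (pullback.fst (kernel.ι f) (cokernel.π N.arrow))).mp
        (by rw [hz, comp_zero])
    haveI : Mono f := Abelian.mono_of_kernel_ι_eq_zero _ hι
    exact isIso_of_mono_of_epi f

/-- Compute composition of a biproduct lift with an arbitrary morphism as a sum. -/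
lemma aux_lift_comp_eq_sum {J : Type} [Fintype J] (f : J → C) [HasBiproduct f]
    {W Z : C} (g : ∀ j, W ⟶ f j) (u : ⨁ f ⟶ Z) :
    biproduct.lift g ≫ u = ∑ j, g j ≫ biproduct.ι f j ≫ u := by
  rw [biproduct.lift_eq, Preadditive.sum_comp]
  simp [Category.assoc]

end Aux

section Main

variable {k : Type*} [Field k] {C : Type*} [Category C] [Abelian C] [Linear k C]

lemma aux_main (O : C) (hO : IsNoetherianObject O) (n : ℕ) :
    ∀ (M : Fin n → C) (q : ∀ i, O ⟶ M i), (∀ i, Epi (q i)) →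
    (∀ (P : C), Simple P → ∀ i : Fin n,
      LinearMap.range (Linear.leftComp k P (q i)) ⊓
        (⨆ j ∈ ({i}ᶜ : Set (Fin n)), LinearMap.range (Linear.leftComp k P (q j))) = ⊥) →
    Epi (biproduct.lift q) := by
  induction n with
  | zero =>
    intro M q _ _
    have hz : IsZero (⨁ M) := by
      rw [IsZero.iff_id_eq_zero, ← biproduct.total]
      simp
    exact ⟨fun g h _ => hz.eq_of_src g h⟩
  | succ n IH =>
    intro M q hq indep
    -- the lift of the first `n` quotients is epi, by the inductive hypothesis
    have ha : Epi (biproduct.lift (fun j : Fin n => q j.castSucc)) := by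
      apply IH
      · intro j; exact hq j.castSucc
      · intro P hP i
        refine eq_bot_iff.mpr (le_trans (inf_le_inf_left _ ?_) (indep P hP i.castSucc).le)
        refine iSup₂_le fun j hj => ?_
        refine le_iSup₂_of_le j.castSucc ?_ le_rfl
        simp only [Set.mem_compl_iff, Set.mem_singleton_iff] at hj ⊢
        exact fun hc => hj (Fin.castSucc_injective n hc)
    by_contra hne
    have hQ : ¬ IsZero (cokernel (biproduct.lift q)) := fun hz =>
      hne (Abelian.epi_of_cokernel_π_eq_zero _ (hz.eq_zero_of_tgt _))
    -- the composite `M (last) → ⨁ M → coker` is epi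
    have hlast : Epi (biproduct.ι M (Fin.last n) ≫ cokernel.π (biproduct.lift q)) := by
      apply Abelian.epi_of_cokernel_π_eq_zero
      have hπρ : cokernel.π (biproduct.lift q) ≫
          cokernel.π (biproduct.ι M (Fin.last n) ≫ cokernel.π (biproduct.lift q)) = 0 := by
        have hlast0 : biproduct.ι M (Fin.last n) ≫ cokernel.π (biproduct.lift q) ≫
            cokernel.π (biproduct.ι M (Fin.last n) ≫ cokernel.π (biproduct.lift q)) = 0 := by
          rw [← Category.assoc]; exact cokernel.condition _
        have hsum : ∑ j : Fin (n+1), q j ≫ biproduct.ι M j ≫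
            (cokernel.π (biproduct.lift q) ≫
              cokernel.π (biproduct.ι M (Fin.last n) ≫ cokernel.π (biproduct.lift q))) = 0 := by
          rw [← aux_lift_comp_eq_sum, ← Category.assoc, cokernel.condition, zero_comp]
        rw [Fin.sum_univ_castSucc] at hsum
        rw [hlast0, comp_zero, add_zero] at hsum
        have hat : biproduct.lift (fun j : Fin n => q j.castSucc) ≫
            biproduct.desc (fun j : Fin n => biproduct.ι M j.castSucc ≫
              cokernel.π (biproduct.lift q) ≫
              cokernel.π (biproduct.ι M (Fin.last n) ≫ cokernel.π (biproduct.lift q))) = 0 := by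
          rw [aux_lift_comp_eq_sum]
          simp only [biproduct.ι_desc]
          simpa using hsum
        haveI := ha
        have ht0 : biproduct.desc (fun j : Fin n => biproduct.ι M j.castSucc ≫
            cokernel.π (biproduct.lift q) ≫
            cokernel.π (biproduct.ι M (Fin.last n) ≫ cokernel.π (biproduct.lift q))) = 0 :=
          (cancel_epi (biproduct.lift (fun j : Fin n => q j.castSucc))).mp
            (by rw [hat, comp_zero])
        apply biproduct.hom_ext'
        intro j
        rw [comp_zero]
        induction j using Fin.lastCases with
        | last => simpa using hlast0
        | cast j =>
          have hc := biproduct.ι_desc (fun j : Fin n => biproduct.ι M j.castSucc ≫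
            cokernel.π (biproduct.lift q) ≫
            cokernel.π (biproduct.ι M (Fin.last n) ≫ cokernel.π (biproduct.lift q))) j
          rw [ht0, comp_zero] at hc
          simpa using hc.symm
      exact (cancel_epi (cokernel.π (biproduct.lift q))).mp (by rw [hπρ, comp_zero])
    -- the cokernel is a quotient of `O`, hence noetherian; take a simple quotient
    haveI := hq (Fin.last n)
    haveI := hlast
    have he : Epi (q (Fin.last n) ≫
        biproduct.ι M (Fin.last n) ≫ cokernel.π (biproduct.lift q)) := epi_comp _ _
    obtain ⟨P, σ, hσ, hP⟩ := aux_exists_simple_quotient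
      (aux_noetherianObject_of_epi _ he hO) hQ
    haveI := hσ
    haveI := hP
    -- each component `M i → coker → P` vanishes, by the independence hypothesis
    have hzero : ∀ i : Fin (n+1),
        biproduct.ι M i ≫ cokernel.π (biproduct.lift q) ≫ σ = 0 := by
      intro i
      have hsum : ∑ j : Fin (n+1),
          q j ≫ biproduct.ι M j ≫ (cokernel.π (biproduct.lift q) ≫ σ) = 0 := by
        rw [← aux_lift_comp_eq_sum, ← Category.assoc, cokernel.condition, zero_comp]
      have h2 := Finset.sum_erase_add Finset.univ
        (fun j => q j ≫ biproduct.ι M j ≫ (cokernel.π (biproduct.lift q) ≫ σ))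
        (Finset.mem_univ i)
      rw [hsum] at h2
      have hneg : q i ≫ biproduct.ι M i ≫ (cokernel.π (biproduct.lift q) ≫ σ) =
          -∑ j ∈ Finset.univ.erase i,
            q j ≫ biproduct.ι M j ≫ (cokernel.π (biproduct.lift q) ≫ σ) :=
        eq_neg_of_add_eq_zero_right h2
      have hmem : q i ≫ biproduct.ι M i ≫ (cokernel.π (biproduct.lift q) ≫ σ) ∈
          LinearMap.range (Linear.leftComp k P (q i)) ⊓
          (⨆ j ∈ ({i}ᶜ : Set (Fin (n+1))),
            LinearMap.range (Linear.leftComp k P (q j))) := by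
        refine Submodule.mem_inf.mpr ⟨?_, ?_⟩
        · exact LinearMap.mem_range.mpr
            ⟨biproduct.ι M i ≫ (cokernel.π (biproduct.lift q) ≫ σ), rfl⟩
        · rw [hneg]
          apply Submodule.neg_mem
          apply Submodule.sum_mem
          intro j hj
          have hj' : j ∈ ({i}ᶜ : Set (Fin (n+1))) := by
            simpa using (Finset.mem_erase.mp hj).1
          exact Submodule.mem_iSup_of_mem j (Submodule.mem_iSup_of_mem hj'
            (LinearMap.mem_range.mpr
              ⟨biproduct.ι M j ≫ (cokernel.π (biproduct.lift q) ≫ σ), rfl⟩))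
      rw [indep P hP i] at hmem
      have hz0 : q i ≫ biproduct.ι M i ≫ (cokernel.π (biproduct.lift q) ≫ σ) = 0 :=
        (Submodule.mem_bot k).mp hmem
      haveI := hq i
      have := (cancel_epi (q i)).mp (by rw [comp_zero]; exact hz0 :
        q i ≫ biproduct.ι M i ≫ (cokernel.π (biproduct.lift q) ≫ σ) = q i ≫ 0)
      simpa using this
    have hπσ : cokernel.π (biproduct.lift q) ≫ σ = 0 :=
      biproduct.hom_ext' _ _ fun j => by rw [comp_zero]; simpa using hzero j
    have hσ0 : σ = 0 :=
      (cancel_epi (cokernel.π (biproduct.lift q))).mp (by rw [hπσ, comp_zero])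
    exact Simple.not_isZero P (IsZero.of_epi_eq_zero σ hσ0)

end Main

/-- Let `k` be a field, `C` a `k`-linear abelian category, `O` a noetherian
object of `C` and `q i : O → M i` (`i : Fin n`) epimorphisms.  For each simple object `P`,
precomposition with `q i` is an injective `k`-linear map `Hom(M i, P) → Hom(O, P)`;
let `V i P` be its image.  If for every simple `P` the subspaces `V 1 P, …, V n P` of
`Hom(O, P)` are linearly independent (i.e. `V i P ⊓ Σ_{j ≠ i} V j P = 0` for each `i`),
then the induced morphism `O → M 1 ⊕ ⋯ ⊕ M n` is an epimorphism. -/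
theorem epi_into_biproduct_of_independent_simple_quotients
    {k : Type*} [Field k] {C : Type*} [Category C] [Abelian C] [Linear k C]
    (O : C) (hO : IsNoetherianObject O)
    (n : ℕ) (M : Fin n → C) (q : ∀ i, O ⟶ M i) (hq : ∀ i, Epi (q i))
    (V : Fin n → ∀ P : C, Submodule k (O ⟶ P))
    (hV : ∀ (i : Fin n) (P : C), V i P = LinearMap.range (Linear.leftComp k P (q i)))
    (indep : ∀ P : C, Simple P → ∀ i : Fin n,
      V i P ⊓ (⨆ j ∈ ({i}ᶜ : Set (Fin n)), V j P) = ⊥) :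
    (∀ (P : C), Simple P → ∀ i : Fin n,
        Function.Injective (Linear.leftComp k P (q i))) ∧
      (haveI : HasFiniteBiproducts C := Abelian.hasFiniteBiproducts
       Epi (biproduct.lift q)) := by
  constructor
  · intro P _ i g₁ g₂ h
    haveI := hq i
    exact (cancel_epi (q i)).mp (by simpa using h)
  · refine aux_main (k := k) O hO n M q hq ?_
    intro P hP i
    have h := indep P hP i
    simp only [hV] at h
    exact h
end

section
/- Let M be a (B ⊗_k R)-module that is flat as an R-module, and let F be an exact functor from the category of left B-modules to itself that commutes with arbitrary direct sums. Then F(M) (where M is regarded as a B-module), equipped with the R-module structure induced by applying F to the action map, i.e. by the ring homomorphism R → End_B(M) → End_B(F(M)), is flat as an R-module. -/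
open CategoryTheory

/-- The ring homomorphism `End_B(M) →+* End_B(F M)` induced by an additive functor
`F : ModuleCat B ⥤ ModuleCat B`. -/
noncomputable def inducedEndRingHom (B : Type u) [Ring B]
    (F : ModuleCat.{u} B ⥤ ModuleCat.{u} B) [F.Additive]
    (M : Type u) [AddCommGroup M] [Module B M] :
    Module.End B M →+* Module.End B ↥(F.obj (ModuleCat.of B M)) where
  toFun φ := (F.map (X := ModuleCat.of B M) (Y := ModuleCat.of B M) (ModuleCat.ofHom φ)).hom
  map_one' := by
    rw [show ModuleCat.ofHom (1 : Module.End B M) = 𝟙 (ModuleCat.of B M) from rfl, F.map_id]; rfl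
  map_mul' φ ψ := by
    rw [show ModuleCat.ofHom (φ * ψ) = ModuleCat.ofHom ψ ≫ ModuleCat.ofHom φ from rfl,
      F.map_comp]; rfl
  map_zero' := by
    rw [show ModuleCat.ofHom (0 : Module.End B M) = 0 from rfl, F.map_zero]; rfl
  map_add' φ ψ := by
    rw [show ModuleCat.ofHom (φ + ψ) = ModuleCat.ofHom φ + ModuleCat.ofHom ψ from rfl,
      F.map_add]; rfl

universe u

section Aux

set_option linter.unusedSectionVars false

variable {B : Type u} [Ring B] {M : Type u} [AddCommGroup M] [Module B M]
variable {ι : Type*} [Fintype ι] [DecidableEq ι]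

/-- The map `M^ι → M`, `v ↦ ∑ i, e i (v i)`. -/
noncomputable def auxGMap (e : ι → Module.End B M) : (ι → M) →ₗ[B] M :=
  ∑ i, (e i) ∘ₗ (LinearMap.proj i)

lemma auxGMap_apply (e : ι → Module.End B M) (v : ι → M) :
    auxGMap e v = ∑ i, e i (v i) := by
  simp [auxGMap]

lemma auxGMap_comp_single (e : ι → Module.End B M) (i : ι) :
    (auxGMap e) ∘ₗ (LinearMap.single B (fun _ : ι => M) i) = e i := by
  ext y
  simp only [LinearMap.comp_apply, LinearMap.single_apply, auxGMap_apply]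
  rw [Finset.sum_eq_single i]
  · simp
  · intro j _ hj
    rw [Pi.single_eq_of_ne hj, map_zero]
  · intro h; exact absurd (Finset.mem_univ i) h

end Aux

set_option maxHeartbeats 1000000 in
/-- Let `k` be a field, `B` an associative unital `k`-algebra and `R` a
commutative `k`-algebra.  Let `M` be a `B`-module together with a `k`-algebra homomorphism
`ρ : R → End_B(M)` (i.e. a `(B ⊗_k R)`-module) which is flat as an `R`-module, and let
`F` be an exact endofunctor of the category of `B`-modules commuting with arbitrary
direct sums.  Then `F(M)`, with the `R`-module structure given by the ring homomorphism
`R → End_B(M) → End_B(F(M))`, is flat as an `R`-module. -/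
theorem flat_of_exact_coproductPreserving_functor
    (k : Type u) [Field k] (B : Type u) [Ring B] [Algebra k B]
    (R : Type u) [CommRing R] [Algebra k R]
    (M : Type u) [AddCommGroup M] [Module B M] [Module k M] [SMulCommClass B k M] [IsScalarTower k B M]
    (ρ : R →ₐ[k] Module.End B M)
    (hflat : letI : Module R M := Module.compHom M ρ.toRingHom; Module.Flat R M)
    (F : ModuleCat.{u} B ⥤ ModuleCat.{u} B) [F.Additive]
    [Limits.PreservesFiniteLimits F] [Limits.PreservesFiniteColimits F]
    (hsums : ∀ ι : Type u, Limits.PreservesColimitsOfShape (Discrete ι) F) :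
    letI : Module R ↥(F.obj (ModuleCat.of B M)) :=
      Module.compHom _ ((inducedEndRingHom B F M).comp ρ.toRingHom)
    Module.Flat R ↥(F.obj (ModuleCat.of B M)) := by
  classical
  letI : Module R M := Module.compHom M ρ.toRingHom
  letI : Module R ↥(F.obj (ModuleCat.of B M)) :=
    Module.compHom _ ((inducedEndRingHom B F M).comp ρ.toRingHom)
  show Module.Flat R ↥(F.obj (ModuleCat.of B M))
  rw [Module.Flat.iff_forall_isTrivialRelation]
  intro l f x hx
  classical
  -- scalar action unfoldings
  have hsmulM : ∀ (r : R) (m : M), r • m = ρ r m := fun _ _ => rfl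
  have hsmulN : ∀ (r : R) (z : ↥(F.obj (ModuleCat.of B M))),
      r • z = (F.map (X := ModuleCat.of B M) (Y := ModuleCat.of B M) (ModuleCat.ofHom (ρ r))).hom z := fun _ _ => rfl
  -- the syzygy type
  set J : Type u := {a : (Fin l) → R // ∑ i, f i * a i = 0} with hJ
  -- objects
  set P : ModuleCat.{u} B := ModuleCat.of B ((Fin l) → M) with hP
  set D : ModuleCat.{u} B := ModuleCat.of B (DirectSum J fun _ => M) with hD
  -- morphisms
  set rhom : ∀ _ : R, (ModuleCat.of B M ⟶ ModuleCat.of B M) := fun r => ModuleCat.ofHom (ρ r) with hrhom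
  set g : P ⟶ ModuleCat.of B M := ModuleCat.ofHom (auxGMap (fun i : Fin l => ρ (f i))) with hg
  set colmL : ∀ _ : J, (M →ₗ[B] ((Fin l) → M)) :=
    fun a => LinearMap.pi (R := B) (φ := fun _ : (Fin l) => M) (fun i => ρ (a.1 i)) with hcolmL
  set colm : ∀ _ : J, (ModuleCat.of B M ⟶ P) := fun a => ModuleCat.ofHom (colmL a) with hcolm
  set ΦL : (DirectSum J fun _ => M) →ₗ[B] ((Fin l) → M) :=
    DirectSum.toModule B J ((Fin l) → M) (fun a => colmL a) with hΦL
  set Φ : D ⟶ P := ModuleCat.ofHom ΦL with hΦ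
  set pr : ∀ _ : (Fin l), (P ⟶ ModuleCat.of B M) :=
    fun i => ModuleCat.ofHom (LinearMap.proj i : ((Fin l) → M) →ₗ[B] M) with hpr
  set sing : ∀ _ : (Fin l), (ModuleCat.of B M ⟶ P) :=
    fun i => ModuleCat.ofHom (LinearMap.single B (fun _ : (Fin l) => M) i) with hsing
  set lofm : ∀ _ : J, (ModuleCat.of B M ⟶ D) :=
    fun a => ModuleCat.ofHom (DirectSum.lof B J (fun _ => M) a) with hlofm
  -- application of composition
  have happ : ∀ {X Y Z : ModuleCat.{u} B} (u : X ⟶ Y) (v : Y ⟶ Z) (t : ↥(F.obj X)),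
      (F.map (u ≫ v)).hom t = (F.map v).hom ((F.map u).hom t) := by
    intro X Y Z u v t
    rw [F.map_comp]
    rfl
  -- composing a column with g is zero
  have hcolg : ∀ a : J, colm a ≫ g = 0 := by
    intro a
    refine ModuleCat.hom_ext (LinearMap.ext fun y => ?_)
    show (auxGMap fun i => ρ (f i)) (colmL a y) = 0
    rw [hcolmL]
    rw [auxGMap_apply]
    have e : ∀ i : (Fin l), (ρ (f i))
        ((LinearMap.pi (R := B) (φ := fun _ : (Fin l) => M) (fun i => ρ (a.1 i))) y i) =
        ρ (f i * a.1 i) y := by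
      intro i
      rw [map_mul]
      rfl
    rw [Finset.sum_congr rfl fun i _ => e i, ← LinearMap.sum_apply, ← map_sum, a.2,
      map_zero]
    rfl
  -- composing with the inclusions
  have hlofΦ' : ∀ (a : J) (y : M),
      ΦL ((DirectSum.lof B J (fun _ => M) a) y) = colmL a y := by
    intro a y
    show (DirectSum.toModule B J ((Fin l) → M) (fun a => colmL a))
      ((DirectSum.lof B J (fun _ => M) a) y) = colmL a y
    exact DirectSum.toModule_lof (R := B) (M := fun _ : J => M)
      (φ := fun a => colmL a) a y
  have hlofΦ : ∀ a : J, lofm a ≫ Φ = colm a :=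
    fun a => ModuleCat.hom_ext (LinearMap.ext fun y => hlofΦ' a y)
  -- the short complex and its exactness
  have hzero : Φ ≫ g = 0 := by
    apply ModuleCat.hom_ext
    rw [ModuleCat.hom_comp]
    refine DirectSum.linearMap_ext _ fun a => ?_
    refine LinearMap.ext fun y => ?_
    show g.hom (ΦL ((DirectSum.lof B J (fun _ => M) a) y)) = 0
    rw [hlofΦ' a y]
    show g.hom ((colm a).hom y) = 0
    exact congrArg (fun (u : ModuleCat.of B M ⟶ ModuleCat.of B M) => u.hom y) (hcolg a)
  set S : ShortComplex (ModuleCat.{u} B) := ShortComplex.mk Φ g hzero with hS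
  have hexact : S.Exact := by
    rw [ShortComplex.moduleCat_exact_iff]
    intro v hv
    have h0 : (auxGMap (fun i => ρ (f i)) : ((Fin l) → M) →ₗ[B] M) v = 0 := hv
    rw [auxGMap_apply] at h0
    have hv' : ∑ i, f i • v i = 0 := by simpa [hsmulM] using h0
    obtain ⟨κ, a, y, h1, h2⟩ := Module.Flat.iff_forall_isTrivialRelation.mp hflat hv'
    refine ⟨∑ j, DirectSum.lof B J (fun _ => M) ⟨fun i => a i j, h2 j⟩ (y j), ?_⟩
    show ΦL _ = v
    rw [map_sum]
    funext i
    have e : ∀ j : Fin κ, ΦL (DirectSum.lof B J (fun _ => M) ⟨fun i => a i j, h2 j⟩ (y j)) =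
        colmL ⟨fun i => a i j, h2 j⟩ (y j) :=
      fun j => hlofΦ' _ (y j)
    rw [Finset.sum_congr rfl fun j _ => e j]
    have e2 : (∑ j : Fin κ, colmL ⟨fun i => a i j, h2 j⟩ (y j)) i = ∑ j : Fin κ, ρ (a i j) (y j) := by
      rw [Finset.sum_apply]
      rfl
    rw [e2, h1 i]
    exact Finset.sum_congr rfl fun j _ => hsmulM _ _
  have hexactF : (S.map F).Exact := hexact.map F
  -- transport the relation into `F.obj P`
  set z : ↥(F.obj P) := ∑ i, (F.map (sing i)).hom (x i) with hz
  have hgz : (F.map g).hom z = 0 := by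
    rw [hz, map_sum]
    have e : ∀ i : (Fin l), (F.map g).hom ((F.map (sing i)).hom (x i)) = (F.map (rhom (f i))).hom (x i) := by
      intro i
      rw [← happ]
      have e1 : sing i ≫ g = rhom (f i) := by
        apply ModuleCat.hom_ext
        exact auxGMap_comp_single _ i
      rw [e1]
    rw [Finset.sum_congr rfl fun i _ => e i]
    simpa [hsmulN, hrhom] using hx
  obtain ⟨w, hw⟩ : ∃ w : ↥(F.obj D), (F.map Φ).hom w = z :=
    (ShortComplex.moduleCat_exact_iff (S.map F)).mp hexactF z hgz
  -- the canonical map `⨁_J F(M) → F(⨁_J M)` and its surjectivity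
  set ψ : (DirectSum J fun _ => ↥(F.obj (ModuleCat.of B M))) →ₗ[B] ↥(F.obj D) :=
    DirectSum.toModule B J ↥(F.obj D) (fun a => (F.map (lofm a)).hom) with hψ
  have hψof : ∀ (a : J) (t : ↥(F.obj (ModuleCat.of B M))),
      ψ (DirectSum.of (fun _ : J => ↥(F.obj (ModuleCat.of B M))) a t) = (F.map (lofm a)).hom t := by
    intro a t
    rw [← DirectSum.lof_eq_of B]
    show (DirectSum.toModule B J ↥(F.obj D) (fun a => (F.map (lofm a)).hom))
      ((DirectSum.lof B J (fun _ => ↥(F.obj (ModuleCat.of B M))) a) t) = (F.map (lofm a)).hom t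
    exact DirectSum.toModule_lof (R := B) (ι := J)
      (M := fun _ : J => ↥(F.obj (ModuleCat.of B M))) (N := ↥(F.obj D)) a t
  have hψsurj : Function.Surjective ψ := by
    haveI := hsums J
    have hc : Limits.IsColimit
        (F.mapCocone (ModuleCat.coproductCocone (fun _ : J => ModuleCat.of B M))) :=
      Limits.isColimitOfPreserves F
        (ModuleCat.coproductCoconeIsColimit (fun _ : J => ModuleCat.of B M))
    set c'' : Limits.Cocone (Discrete.functor (fun _ : J => ModuleCat.of B M) ⋙ F) :=
      { pt := ModuleCat.of B (DirectSum J fun _ => ↥(F.obj (ModuleCat.of B M)))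
        ι := Discrete.natTrans fun a =>
          (ModuleCat.ofHom (DirectSum.lof B J (fun _ => ↥(F.obj (ModuleCat.of B M))) a.as) :
            F.obj (ModuleCat.of B M) ⟶ _) } with hc''
    set χ : F.obj D ⟶ ModuleCat.of B (DirectSum J fun _ => ↥(F.obj (ModuleCat.of B M))) :=
      hc.desc c'' with hχ
    have hfac : ∀ a : J, F.map (lofm a) ≫ χ = ModuleCat.ofHom (DirectSum.lof B J (fun _ => ↥(F.obj (ModuleCat.of B M))) a) :=
      fun a => hc.fac c'' ⟨a⟩
    have h1 : ∀ a : J,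
        (F.mapCocone (ModuleCat.coproductCocone (fun _ : J => ModuleCat.of B M))).ι.app
          ⟨a⟩ = F.map (lofm a) := fun a => rfl
    have hψχ : χ ≫ (ModuleCat.ofHom ψ : ModuleCat.of B (DirectSum J fun _ => ↥(F.obj (ModuleCat.of B M))) ⟶
        F.obj D) = 𝟙 (F.obj D) := by
      refine (hc.uniq
        (F.mapCocone (ModuleCat.coproductCocone (fun _ : J => ModuleCat.of B M))) _ ?_).trans
        (hc.uniq _ _ ?_).symm
      · rintro ⟨a⟩
        refine ModuleCat.hom_ext (LinearMap.ext fun t => ?_)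
        have e : χ.hom ((F.map (lofm a)).hom t) =
            DirectSum.lof B J (fun _ => ↥(F.obj (ModuleCat.of B M))) a t :=
          congrArg (fun u => u.hom t) (hfac a)
        show ψ (χ.hom ((F.map (lofm a)).hom t)) = (F.map (lofm a)).hom t
        rw [e]
        exact hψof a t
      · rintro ⟨a⟩
        exact Category.comp_id _
    intro t
    refine ⟨χ.hom t, ?_⟩
    exact congrArg (fun (u : F.obj D ⟶ F.obj D) => u.hom t) hψχ
  obtain ⟨d, hd⟩ := hψsurj w
  -- x i is recovered by applying F to the projections
  have hxi : ∀ i : (Fin l), (F.map (pr i)).hom z = x i := by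
    intro i
    rw [hz, map_sum]
    rw [Finset.sum_eq_single i]
    · rw [← happ]
      have e : sing i ≫ pr i = 𝟙 (ModuleCat.of B M) :=
        ModuleCat.hom_ext <| LinearMap.proj_comp_single_same B (fun _ : (Fin l) => M) i
      rw [e, F.map_id]
      rfl
    · intro j _ hj
      rw [← happ]
      have e : sing j ≫ pr i = (0 : ModuleCat.of B M ⟶ ModuleCat.of B M) :=
        ModuleCat.hom_ext <| LinearMap.proj_comp_single_ne B (fun _ : (Fin l) => M) i j (Ne.symm hj)
      rw [e, F.map_zero]
      rfl
    · intro h; exact absurd (Finset.mem_univ i) h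
  -- extract the finite data
  refine ⟨d.support.card, fun i j => ((d.support.equivFin.symm j : d.support) : J).1 i,
    fun j => d (d.support.equivFin.symm j : J), ?_, ?_⟩
  · intro i
    have key : x i = ∑ a ∈ d.support, (a.1 i) • d a := by
      rw [← hxi i, ← hw, ← hd]
      conv_lhs => rw [← DirectSum.sum_support_of d]
      rw [map_sum, map_sum, map_sum]
      refine Finset.sum_congr rfl fun a _ => ?_
      rw [hψof a (d a), ← happ, ← happ]
      have e : lofm a ≫ Φ ≫ pr i = rhom (a.1 i) := by
        rw [← Category.assoc, hlofΦ a]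
        refine ModuleCat.hom_ext (LinearMap.ext fun y => ?_)
        show (LinearMap.proj (R := B) (φ := fun _ : (Fin l) => M) i)
          ((LinearMap.pi (R := B) (φ := fun _ : (Fin l) => M) (fun i => ρ (a.1 i))) y) = ρ (a.1 i) y
        rfl
      rw [e]
      exact (hsmulN _ _).symm
    rw [key]
    refine (Finset.sum_coe_sort d.support (fun a => (a.1 i) • d a)).symm.trans ?_
    exact (Equiv.sum_comp d.support.equivFin.symm
      (fun a : d.support => ((a : J).1 i) • d (a : J))).symm
  · intro j
    exact ((d.support.equivFin.symm j : d.support) : J).2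
end
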